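/- Let r ∈ ℕ with r ≥ 2 and p ∈ (0,1). Let N₁ be negative binomial with parameters r+1 and p, and N₂ be negative binomial with parameters r−1 and 1−p, independent, and let ĝ = (r/(N₁−1))·(N₂/(r−1)) and g = p/(1−p). Then the variance of ĝ satisfies Var[ĝ]/g² ≤ (1/(r−1))·(1 − p(1−p)/(r−1+2p)), where Var[ĝ] = E[ĝ²] − (E[ĝ])² and all expectations are the corresponding (double) series over n₁ ≥ r+1 and n₂ ≥ r−1 weighted by the negative binomial probabilities. -/

import Mathlib

open scoped BigOperators

/-- Expectation of `f(N)` where `N` is negative binomial with parameters `s` and `q`: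
`E[f(N)] = Σ_{n ≥ s} f(n) C(n−1, s−1) q^s (1−q)^{n−s}`, written with `n = s + k`. -/
noncomputable def negbinExp (s : ℕ) (q : ℝ) (f : ℕ → ℝ) : ℝ :=
  ∑' k : ℕ, ((s + k - 1).choose (s - 1) : ℝ) * q ^ s * (1 - q) ^ k * f (s + k)

/-- Expectation of `f(N₁, N₂)` for independent negative binomials with parameters
`(s₁, q₁)` and `(s₂, q₂)`. -/
noncomputable def negbinExp2 (s₁ : ℕ) (q₁ : ℝ) (s₂ : ℕ) (q₂ : ℝ) (f : ℕ → ℕ → ℝ) : ℝ :=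
  ∑' k₁ : ℕ, ∑' k₂ : ℕ,
    ((s₁ + k₁ - 1).choose (s₁ - 1) : ℝ) * q₁ ^ s₁ * (1 - q₁) ^ k₁ *
      (((s₂ + k₂ - 1).choose (s₂ - 1) : ℝ) * q₂ ^ s₂ * (1 - q₂) ^ k₂) *
      f (s₁ + k₁) (s₂ + k₂)

/-- The m-th harmonic number `H_m = Σ_{k=1}^m 1/k`, `H_0 = 0`. -/
noncomputable def H (m : ℕ) : ℝ := ∑ k ∈ Finset.range m, (1 : ℝ) / (k + 1)

/-- The odds estimator `ĝ = (r/(N₁−1))·(N₂/(r−1))`. -/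
noncomputable def ghat (r : ℕ) (n₁ n₂ : ℕ) : ℝ :=
  ((r : ℝ) / ((n₁ : ℝ) - 1)) * ((n₂ : ℝ) / ((r : ℝ) - 1))

lemma stepN (m k : ℕ) : (m + 1 + k) * ((m + k).choose m) = (m + 1) * ((m + 1 + k).choose (m + 1)) := by
  have h := Nat.add_one_mul_choose_eq (m + k) m
  have e : m + k + 1 = m + 1 + k := by omega
  rw [e] at h
  linarith

lemma hasSum_nb (m : ℕ) {x : ℝ} (hx : |x| < 1) :
    HasSum (fun k : ℕ => ((m + k).choose m : ℝ) * x ^ k) (1 / (1 - x) ^ (m + 1)) := by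
  simpa [add_comm] using hasSum_choose_mul_geometric_of_norm_lt_one (𝕜 := ℝ) m
    (by rwa [Real.norm_eq_abs])

lemma hasSum_nb' (m : ℕ) {x c : ℝ} (hx : |x| < 1) {S : ℝ} (hS : c / (1 - x) ^ (m + 1) = S) :
    HasSum (fun k : ℕ => ((m + k).choose m : ℝ) * c * x ^ k) S := by
  have h := (hasSum_nb m hx).mul_left c
  rw [mul_one_div, hS] at h
  exact h.congr_fun (fun k => by ring)

lemma id3N (r k : ℕ) (hr : 2 ≤ r) :
    k * ((r - 1 + k).choose (r - 1)) = (r - 1 + k) * ((r - 2 + k).choose (r - 1)) := by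
  have h1 := Nat.choose_succ_right_eq (r - 1 + k) (r - 1)
  have h2 := Nat.add_one_mul_choose_eq (r - 2 + k) (r - 1)
  have e1 : r - 1 + 1 = r := by omega
  have e2 : r - 2 + k + 1 = r - 1 + k := by omega
  have e3 : r - 1 + k - (r - 1) = k := by omega
  rw [e1, e3] at h1
  rw [e2, e1] at h2
  linarith

noncomputable def nbw (r : ℕ) (p : ℝ) (k : ℕ) : ℝ :=
  ((r - 1 + k).choose (r - 1) : ℝ) * p ^ r * (1 - p) ^ k

noncomputable def nbD (r : ℕ) (p : ℝ) : ℝ := ∑' k : ℕ, nbw r p k / ((r : ℝ) + k)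

lemma nbw_nonneg (r : ℕ) {p : ℝ} (hp0 : 0 < p) (hp1 : p < 1) (k : ℕ) : 0 ≤ nbw r p k := by
  unfold nbw
  have h1 : (0:ℝ) < 1 - p := by linarith
  positivity

lemma abs_lt_one {p : ℝ} (hp0 : 0 < p) (hp1 : p < 1) : |1 - p| < 1 := by
  rw [abs_lt]; constructor <;> linarith

lemma hasSum_nbw (r : ℕ) (hr : 1 ≤ r) {p : ℝ} (hp0 : 0 < p) (hp1 : p < 1) :
    HasSum (nbw r p) 1 := by
  exact hasSum_nb' (r - 1) (c := p ^ r) (abs_lt_one hp0 hp1)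
    (S := 1) (by
      rw [sub_sub_cancel, show r - 1 + 1 = r from by omega]
      exact div_self (pow_ne_zero _ hp0.ne'))

lemma Dquad (r : ℕ) (hr : 2 ≤ r) {p : ℝ} (hp0 : 0 < p) (hp1 : p < 1) :
    (r:ℝ) * (nbD r p) ^ 2 + ((r:ℝ) - 1) * (nbD r p) ≤ p := by
  have hq0 : (0:ℝ) < 1 - p := by linarith
  have hR2 : (2:ℝ) ≤ (r:ℝ) := by exact_mod_cast hr
  have hwnn := nbw_nonneg r hp0 hp1
  have hw : HasSum (nbw r p) 1 := hasSum_nbw r (by omega) hp0 hp1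
  have hSw : Summable (nbw r p) := hw.summable
  have hRk : ∀ k : ℕ, (0:ℝ) < (r:ℝ) + k := by
    intro k
    have h0 : (0:ℝ) ≤ (k:ℝ) := Nat.cast_nonneg k
    linarith
  have hone : ∀ k : ℕ, (1:ℝ) ≤ (r:ℝ) + k := by
    intro k
    have h0 : (0:ℝ) ≤ (k:ℝ) := Nat.cast_nonneg k
    linarith
  have hRk1 : ∀ k : ℕ, (0:ℝ) < (r:ℝ) + k + 1 := fun k => by have := hRk k; linarith
  -- summabilities
  have hSD : Summable (fun k : ℕ => nbw r p k / ((r:ℝ) + k)) := by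
    apply Summable.of_nonneg_of_le (fun k => div_nonneg (hwnn k) (hRk k).le) _ hSw
    intro k
    rw [div_le_iff₀ (hRk k)]
    nlinarith [hwnn k, hone k]
  have hSE2 : Summable (fun k : ℕ => nbw r p k / ((r:ℝ) + k + 1)) := by
    apply Summable.of_nonneg_of_le (fun k => div_nonneg (hwnn k) (hRk1 k).le) _ hSw
    intro k
    rw [div_le_iff₀ (hRk1 k)]
    nlinarith [hwnn k, hone k]
  have hSE3 : Summable (fun k : ℕ => nbw r p k / (((r:ℝ) + k) * ((r:ℝ) + k + 1))) := by
    apply Summable.of_nonneg_of_le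
      (fun k => div_nonneg (hwnn k) (mul_pos (hRk k) (hRk1 k)).le) _ hSw
    intro k
    rw [div_le_iff₀ (mul_pos (hRk k) (hRk1 k))]
    have h12 : (1:ℝ) ≤ ((r:ℝ) + k) * ((r:ℝ) + k + 1) := by nlinarith [hone k]
    nlinarith [mul_le_mul_of_nonneg_left h12 (hwnn k)]
  have hSG : Summable (fun k : ℕ => nbw r p k * (((r:ℝ) + k + 1) / ((r:ℝ) + k))) := by
    apply Summable.of_nonneg_of_le
      (fun k => mul_nonneg (hwnn k) (div_nonneg (hRk1 k).le (hRk k).le)) _ (hSw.mul_left 2)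
    intro k
    have h1 : ((r:ℝ) + k + 1) / ((r:ℝ) + k) ≤ 2 := by
      rw [div_le_iff₀ (hRk k)]; have := hone k; linarith
    calc nbw r p k * (((r:ℝ) + k + 1) / ((r:ℝ) + k)) ≤ nbw r p k * 2 :=
          mul_le_mul_of_nonneg_left h1 (hwnn k)
      _ = 2 * nbw r p k := by ring
  -- shifted functions
  set z : ℕ → ℝ := fun j => ((r - 2 + j).choose (r - 1) : ℝ) * p ^ r * (1 - p) ^ j with hzdef
  set v : ℕ → ℝ := fun j => z j / ((r:ℝ) + j) with hvdef
  have hz0 : z 0 = 0 := by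
    simp [hzdef, Nat.choose_eq_zero_of_lt (show r - 2 < r - 1 by omega)]
  have hzs : ∀ k : ℕ, z (k + 1) = (1 - p) * nbw r p k := by
    intro k
    simp only [hzdef, nbw]
    rw [show r - 2 + (k + 1) = r - 1 + k from by omega]
    ring
  have hvs : ∀ k : ℕ, v (k + 1) = (1 - p) * (nbw r p k / ((r:ℝ) + k + 1)) := by
    intro k
    simp only [hvdef, hzs k]
    push_cast
    ring
  have hv0 : v 0 = 0 := by simp [hvdef, hz0]
  have hZsum : HasSum z (1 - p) := by
    have h1 : HasSum (fun n : ℕ => z (n + 1)) (1 - p) := by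
      simp only [hzs]
      simpa using hw.mul_left (1 - p)
    have := (hasSum_nat_add_iff (f := z) 1).mp h1
    simpa [hz0] using this
  have hSv : Summable v := by
    have h1 : Summable (fun n : ℕ => v (n + 1)) := by
      simp only [hvs]
      exact hSE2.mul_left _
    exact (summable_nat_add_iff 1).mp h1
  have hVsum : HasSum v ((1 - p) * ∑' k : ℕ, nbw r p k / ((r:ℝ) + k + 1)) := by
    have h1 : HasSum (fun n : ℕ => v (n + 1)) ((1 - p) * ∑' k : ℕ, nbw r p k / ((r:ℝ) + k + 1)) := by
      simp only [hvs]
      exact (hSE2.hasSum).mul_left _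
    have := (hasSum_nat_add_iff (f := v) 1).mp h1
    simpa [hv0] using this
  -- cast identity
  have hcast : ∀ k : ℕ, (k:ℝ) * ((r - 1 + k).choose (r - 1) : ℝ)
      = ((r:ℝ) + k - 1) * ((r - 2 + k).choose (r - 1) : ℝ) := by
    intro k
    have hid := id3N r k hr
    have h1 : ((r - 1 + k : ℕ) : ℝ) = (r:ℝ) + k - 1 := by
      rw [Nat.cast_add, Nat.cast_sub (show 1 ≤ r by omega)]
      push_cast
      ring
    calc (k:ℝ) * ((r - 1 + k).choose (r - 1) : ℝ)
        = ((k * ((r - 1 + k).choose (r - 1)) : ℕ) : ℝ) := by push_cast; ring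
      _ = (((r - 1 + k) * ((r - 2 + k).choose (r - 1)) : ℕ) : ℝ) := by rw [hid]
      _ = ((r:ℝ) + k - 1) * ((r - 2 + k).choose (r - 1) : ℝ) := by
          rw [Nat.cast_mul, h1]
  -- Stein identity, termwise
  have hterm : ∀ k : ℕ, (r:ℝ) * (nbw r p k / ((r:ℝ) + k)) - v k = nbw r p k - z k := by
    intro k
    have hne := (hRk k).ne'
    have h2 : (r:ℝ) * ((r - 1 + k).choose (r - 1) : ℝ) - ((r - 2 + k).choose (r - 1) : ℝ)
        = ((r:ℝ) + k) * (((r - 1 + k).choose (r - 1) : ℝ) - ((r - 2 + k).choose (r - 1) : ℝ)) := by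
      have := hcast k
      ring_nf
      ring_nf at this
      linarith
    simp only [hvdef, hzdef, nbw]
    rw [mul_div_assoc', div_sub_div_same, div_eq_iff hne]
    linear_combination (p ^ r * (1 - p) ^ k) * h2
  -- Stein identity, summed
  set E2v : ℝ := ∑' k : ℕ, nbw r p k / ((r:ℝ) + k + 1) with hE2v
  set E3v : ℝ := ∑' k : ℕ, nbw r p k / (((r:ℝ) + k) * ((r:ℝ) + k + 1)) with hE3v
  have hStein : (r:ℝ) * nbD r p - (1 - p) * E2v = p := by
    have h1 : HasSum (fun k : ℕ => (r:ℝ) * (nbw r p k / ((r:ℝ) + k)) - v k)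
        ((r:ℝ) * nbD r p - (1 - p) * E2v) := by
      have h := (hSD.hasSum.mul_left (r:ℝ)).sub hVsum
      rw [hE2v]
      exact h
    have h2 : HasSum (fun k : ℕ => (r:ℝ) * (nbw r p k / ((r:ℝ) + k)) - v k) (1 - (1 - p)) :=
      (hw.sub hZsum).congr_fun hterm
    have := h1.unique h2
    linarith
  -- E3 = D - E2
  have hE3eq : E3v = nbD r p - E2v := by
    rw [hE3v, hE2v, show nbD r p = ∑' k : ℕ, nbw r p k / ((r:ℝ) + k) from rfl, ← Summable.tsum_sub hSD hSE2]
    apply tsum_congr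
    intro k
    have h1 := (hRk k).ne'
    have h2 := (hRk1 k).ne'
    field_simp
    ring
  -- G = 1 + D
  have hG : HasSum (fun k : ℕ => nbw r p k * (((r:ℝ) + k + 1) / ((r:ℝ) + k))) (1 + nbD r p) := by
    have h := hw.add hSD.hasSum
    rw [show (∑' k : ℕ, nbw r p k / ((r:ℝ) + k)) = nbD r p from rfl] at h
    apply h.congr_fun
    intro k
    have h1 := (hRk k).ne'
    field_simp
  -- Cauchy-Schwarz
  have hCS : (nbD r p) ^ 2 ≤ E3v * (1 + nbD r p) := by
    have hbound : ∀ M : ℕ, (∑ k ∈ Finset.range M, nbw r p k / ((r:ℝ) + k)) ^ 2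
        ≤ E3v * (1 + nbD r p) := by
      intro M
      have hcs := Finset.sum_sq_le_sum_mul_sum_of_sq_eq_mul (Finset.range M)
        (r := fun k : ℕ => nbw r p k / ((r:ℝ) + k))
        (f := fun k : ℕ => nbw r p k / (((r:ℝ) + k) * ((r:ℝ) + k + 1)))
        (g := fun k : ℕ => nbw r p k * (((r:ℝ) + k + 1) / ((r:ℝ) + k)))
        (fun k _ => div_nonneg (hwnn k) (mul_pos (hRk k) (hRk1 k)).le)
        (fun k _ => mul_nonneg (hwnn k) (div_nonneg (hRk1 k).le (hRk k).le))
        (fun k _ => by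
          have h1 := (hRk k).ne'
          have h2 := (hRk1 k).ne'
          field_simp)
      refine le_trans hcs (mul_le_mul ?_ ?_ ?_ ?_)
      · exact Summable.sum_le_tsum _ (fun k _ => div_nonneg (hwnn k) (mul_pos (hRk k) (hRk1 k)).le) hSE3
      · exact le_trans (Summable.sum_le_tsum _
          (fun k _ => mul_nonneg (hwnn k) (div_nonneg (hRk1 k).le (hRk k).le)) hSG)
          (le_of_eq hG.tsum_eq)
      · exact Finset.sum_nonneg
          (fun k _ => mul_nonneg (hwnn k) (div_nonneg (hRk1 k).le (hRk k).le))
      · exact tsum_nonneg (fun k => div_nonneg (hwnn k) (mul_pos (hRk k) (hRk1 k)).le)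
    have htend : Filter.Tendsto
        (fun M : ℕ => (∑ k ∈ Finset.range M, nbw r p k / ((r:ℝ) + k)) ^ 2)
        Filter.atTop (nhds ((nbD r p) ^ 2)) := by
      exact (hSD.hasSum.tendsto_sum_nat).pow 2
    exact le_of_tendsto htend (Filter.Eventually.of_forall hbound)
  -- combine
  have hE3val : (1 - p) * E3v = p - ((r:ℝ) - 1 + p) * nbD r p := by
    rw [hE3eq]
    have : (1 - p) * E2v = (r:ℝ) * nbD r p - p := by linarith
    nlinarith [this]
  have hDnn : 0 ≤ nbD r p := tsum_nonneg (fun k => div_nonneg (hwnn k) (hRk k).le)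
  have hfin : (1 - p) * (nbD r p) ^ 2 ≤ (p - ((r:ℝ) - 1 + p) * nbD r p) * (1 + nbD r p) := by
    rw [← hE3val]
    have h1 : (1 - p) * (nbD r p) ^ 2 ≤ (1 - p) * (E3v * (1 + nbD r p)) :=
      mul_le_mul_of_nonneg_left hCS hq0.le
    nlinarith [h1]
  nlinarith [hfin]

lemma nbD_nonneg (r : ℕ) (hr : 2 ≤ r) {p : ℝ} (hp0 : 0 < p) (hp1 : p < 1) :
    0 ≤ nbD r p := by
  apply tsum_nonneg
  intro k
  apply div_nonneg (nbw_nonneg r hp0 hp1 k)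
  have h0 : (0:ℝ) ≤ (k:ℝ) := Nat.cast_nonneg k
  have hR2 : (2:ℝ) ≤ (r:ℝ) := by exact_mod_cast hr
  linarith

lemma Dkey (r : ℕ) (hr : 2 ≤ r) {p : ℝ} (hp0 : 0 < p) (hp1 : p < 1) :
    (r:ℝ) * ((r:ℝ) - 1 + p) * ((r:ℝ) - 1 + 2*p) * nbD r p
      ≤ p * ((r:ℝ) * ((r:ℝ) - 1 + 2*p) - p * (1 - p)) := by
  set R : ℝ := (r:ℝ) with hRdef
  have hR2 : (2:ℝ) ≤ R := by rw [hRdef]; exact_mod_cast hr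
  set D : ℝ := nbD r p with hDdef
  have hq := Dquad r hr hp0 hp1
  rw [← hRdef, ← hDdef] at hq
  have hDnn : 0 ≤ D := nbD_nonneg r hr hp0 hp1
  set B : ℝ := R * (R - 1 + p) * (R - 1 + 2*p) with hBdef
  set C : ℝ := p * (R * (R - 1 + 2*p) - p * (1 - p)) with hCdef
  have h0R : (0:ℝ) < R := by linarith
  have ha : (0:ℝ) < R - 1 + p := by linarith
  have ha2 : (0:ℝ) < R - 1 + 2*p := by linarith
  have hq1 : (0:ℝ) < 1 - p := by linarith
  have hB : 0 < B := by rw [hBdef]; exact mul_pos (mul_pos h0R ha) ha2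
  have hC : 0 ≤ C := by
    rw [hCdef]
    apply mul_nonneg hp0.le
    have h5 : (2:ℝ) * 1 ≤ R * (R - 1 + 2*p) :=
      mul_le_mul hR2 (by linarith) (by norm_num) (by linarith)
    nlinarith [sq_nonneg (p - 1/2)]
  have hid : R * C^2 + (R - 1) * C * B - p * B^2 = R * (R - 1 + p)^2 * p^2 * (1 - p)^2 := by
    rw [hBdef, hCdef]; ring
  show B * D ≤ C
  by_contra hcon
  push_neg at hcon
  have hqB : R * (B*D)^2 + (R - 1) * (B*D) * B ≤ p * B^2 := by nlinarith [hq, sq_nonneg B, hB]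
  have h1 : R * C^2 ≤ R * (B*D)^2 := by
    have h1' : C^2 ≤ (B*D)^2 := by nlinarith [mul_self_le_mul_self hC hcon.le]
    exact mul_le_mul_of_nonneg_left h1' h0R.le
  have h2 : (R - 1) * C * B ≤ (R - 1) * (B*D) * B :=
    mul_le_mul_of_nonneg_right
      (mul_le_mul_of_nonneg_left hcon.le (by linarith)) hB.le
  have hpos : 0 < R * (R - 1 + p)^2 * p^2 * (1 - p)^2 :=
    mul_pos (mul_pos (mul_pos h0R (pow_pos ha 2)) (pow_pos hp0 2)) (pow_pos hq1 2)
  linarith [hid, hqB, h1, h2, hpos]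

theorem odds_estimator_relative_variance (r : ℕ) (hr : 2 ≤ r) (p : ℝ)
    (hp0 : 0 < p) (hp1 : p < 1) :
    (negbinExp2 (r + 1) p (r - 1) (1 - p) (fun n₁ n₂ => (ghat r n₁ n₂) ^ 2) -
        (negbinExp2 (r + 1) p (r - 1) (1 - p) (ghat r)) ^ 2) / (p / (1 - p)) ^ 2 ≤
      (1 / ((r : ℝ) - 1)) * (1 - p * (1 - p) / ((r : ℝ) - 1 + 2 * p)) := by
  have hq0 : (0:ℝ) < 1 - p := by linarith
  have hR2 : (2:ℝ) ≤ (r:ℝ) := by exact_mod_cast hr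
  have hqne : (1:ℝ) - p ≠ 0 := hq0.ne'
  have hpa : |p| < 1 := by rw [abs_lt]; constructor <;> linarith
  have hRk : ∀ k : ℕ, (0:ℝ) < (r:ℝ) + k := by
    intro k
    have h0 : (0:ℝ) ≤ (k:ℝ) := Nat.cast_nonneg k
    linarith
  have hR1k : ∀ k : ℕ, (0:ℝ) < (r:ℝ) - 1 + k := by
    intro k
    have h0 : (0:ℝ) ≤ (k:ℝ) := Nat.cast_nonneg k
    linarith
  have hR1 : (0:ℝ) < (r:ℝ) - 1 := by linarith
  -- cast identities
  have castStep1 : ∀ k : ℕ, ((r:ℝ) + k) * ((r - 1 + k).choose (r - 1) : ℝ)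
      = (r:ℝ) * (((r + k).choose r : ℕ) : ℝ) := by
    intro k
    have h := stepN (r - 1) k
    rw [show r - 1 + 1 = r from by omega] at h
    exact_mod_cast h
  have castStep2 : ∀ k : ℕ, ((r:ℝ) - 1 + k) * ((r - 2 + k).choose (r - 2) : ℝ)
      = ((r:ℝ) - 1) * ((r - 1 + k).choose (r - 1) : ℝ) := by
    intro k
    have h := stepN (r - 2) k
    rw [show r - 2 + 1 = r - 1 from by omega] at h
    have h1 : ((r - 1 + k : ℕ) : ℝ) = (r:ℝ) - 1 + k := by
      rw [Nat.cast_add, Nat.cast_sub (show 1 ≤ r by omega)]; push_cast; ring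
    have h2 : ((r - 1 : ℕ) : ℝ) = (r:ℝ) - 1 := by
      rw [Nat.cast_sub (show 1 ≤ r by omega)]; push_cast; ring
    calc ((r:ℝ) - 1 + k) * ((r - 2 + k).choose (r - 2) : ℝ)
        = ((r - 1 + k : ℕ) : ℝ) * ((r - 2 + k).choose (r - 2) : ℝ) := by rw [h1]
      _ = (((r - 1 + k) * ((r - 2 + k).choose (r - 2)) : ℕ) : ℝ) := by push_cast; ring
      _ = (((r - 1) * ((r - 1 + k).choose (r - 1)) : ℕ) : ℝ) := by rw [h]
      _ = ((r:ℝ) - 1) * ((r - 1 + k).choose (r - 1) : ℝ) := by rw [Nat.cast_mul, h2]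
  -- N₁ side series
  have hSD : Summable (fun k : ℕ => nbw r p k / ((r:ℝ) + k)) := by
    apply Summable.of_nonneg_of_le
      (fun k => div_nonneg (nbw_nonneg r hp0 hp1 k) (hRk k).le) _
      (hasSum_nbw r (by omega) hp0 hp1).summable
    intro k
    rw [div_le_iff₀ (hRk k)]
    nlinarith [nbw_nonneg r hp0 hp1 k, hRk k, hR2, Nat.cast_nonneg (α := ℝ) k]
  have hN1a : HasSum (fun k : ℕ => ((r + k).choose r : ℝ) * p ^ (r+1) * (1-p) ^ k
      * ((r:ℝ) / ((r:ℝ) + k))) p := by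
    have h := hasSum_nb' (r - 1) (c := p ^ (r+1)) (abs_lt_one hp0 hp1) (S := p) (by
      rw [sub_sub_cancel, show r - 1 + 1 = r from by omega, pow_succ]
      field_simp)
    apply h.congr_fun
    intro k
    have hdiv1 : ((r + k).choose r : ℝ) * ((r:ℝ) / ((r:ℝ) + k))
        = ((r - 1 + k).choose (r - 1) : ℝ) := by
      rw [mul_div_assoc', div_eq_iff (hRk k).ne']
      linarith [castStep1 k]
    linear_combination (p ^ (r+1) * (1-p) ^ k) * hdiv1
  have hN1b : HasSum (fun k : ℕ => ((r + k).choose r : ℝ) * p ^ (r+1) * (1-p) ^ k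
      * ((r:ℝ) / ((r:ℝ) + k)) ^ 2) ((r:ℝ) * p * nbD r p) := by
    have h := (hSD.hasSum).mul_left ((r:ℝ) * p)
    rw [show ((r:ℝ) * p * ∑' k : ℕ, nbw r p k / ((r:ℝ) + k)) = (r:ℝ) * p * nbD r p from rfl] at h
    apply h.congr_fun
    intro k
    have hdiv1 : ((r + k).choose r : ℝ) * ((r:ℝ) / ((r:ℝ) + k))
        = ((r - 1 + k).choose (r - 1) : ℝ) := by
      rw [mul_div_assoc', div_eq_iff (hRk k).ne']
      linarith [castStep1 k]
    rw [nbw]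
    linear_combination ((r:ℝ) * p ^ (r+1) * (1-p) ^ k / ((r:ℝ) + k)) * hdiv1
  -- N₂ side series
  have hN2a : HasSum (fun k : ℕ => ((r - 2 + k).choose (r - 2) : ℝ) * (1-p) ^ (r-1) * p ^ k
      * (((r:ℝ) - 1 + k) / ((r:ℝ) - 1))) (1 / (1-p)) := by
    have h := hasSum_nb' (r - 1) (c := (1-p) ^ (r-1)) hpa (S := 1 / (1-p)) (by
      rw [show r - 1 + 1 = r from by omega, show r = (r-1) + 1 from by omega, pow_succ]
      rw [show r - 1 + 1 - 1 = r - 1 from by omega]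
      field_simp)
    apply h.congr_fun
    intro k
    have hdiv2 : ((r - 2 + k).choose (r - 2) : ℝ) * (((r:ℝ) - 1 + k) / ((r:ℝ) - 1))
        = ((r - 1 + k).choose (r - 1) : ℝ) := by
      rw [mul_div_assoc', div_eq_iff hR1.ne']
      linarith [castStep2 k]
    linear_combination ((1-p) ^ (r-1) * p ^ k) * hdiv2
  have hN2sqa : HasSum (fun k : ℕ => ((r - 2 + k).choose (r - 2) : ℝ) * (1-p) ^ (r-1) * p ^ k
      * (((r:ℝ) - 1 + k) * ((r:ℝ) + k))) ((r:ℝ) * ((r:ℝ) - 1) / (1-p) ^ 2) := by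
    have h := hasSum_nb' r (c := (1-p) ^ (r-1) * ((r:ℝ) * ((r:ℝ) - 1))) hpa
      (S := (r:ℝ) * ((r:ℝ) - 1) / (1-p) ^ 2) (by
        have h9 : ((1:ℝ)-p) ^ (r-1) ≠ 0 := pow_ne_zero _ hqne
        rw [show r + 1 = (r - 1) + 2 from by omega, pow_add]
        field_simp)
    apply h.congr_fun
    intro k
    linear_combination ((1-p) ^ (r-1) * p ^ k * ((r:ℝ) + k)) * castStep2 k
      + ((1-p) ^ (r-1) * p ^ k * ((r:ℝ) - 1)) * castStep1 k
  have hN2sqb : HasSum (fun k : ℕ => ((r - 2 + k).choose (r - 2) : ℝ) * (1-p) ^ (r-1) * p ^ k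
      * ((r:ℝ) - 1 + k)) (((r:ℝ) - 1) / (1-p)) := by
    have h := hasSum_nb' (r - 1) (c := (1-p) ^ (r-1) * ((r:ℝ) - 1)) hpa
      (S := ((r:ℝ) - 1) / (1-p)) (by
        have h9 : ((1:ℝ)-p) ^ (r-1) ≠ 0 := pow_ne_zero _ hqne
        rw [show r - 1 + 1 = r from by omega, show r = (r-1) + 1 from by omega, pow_succ]
        rw [show r - 1 + 1 - 1 = r - 1 from by omega]
        field_simp)
    apply h.congr_fun
    intro k
    linear_combination ((1-p) ^ (r-1) * p ^ k) * castStep2 k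
  have hN2b : HasSum (fun k : ℕ => ((r - 2 + k).choose (r - 2) : ℝ) * (1-p) ^ (r-1) * p ^ k
      * (((r:ℝ) - 1 + k) / ((r:ℝ) - 1)) ^ 2)
      (((r:ℝ) - 1 + p) / (((r:ℝ) - 1) * (1-p) ^ 2)) := by
    have h := (hN2sqa.sub hN2sqb).mul_left (1 / ((r:ℝ) - 1) ^ 2)
    have hval : 1 / ((r:ℝ) - 1) ^ 2 * ((r:ℝ) * ((r:ℝ) - 1) / (1-p) ^ 2 - ((r:ℝ) - 1) / (1-p))
        = ((r:ℝ) - 1 + p) / (((r:ℝ) - 1) * (1-p) ^ 2) := by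
      field_simp
      ring
    rw [hval] at h
    apply h.congr_fun
    intro k
    have hne := hR1.ne'
    field_simp
    ring
  -- rewrite negbinExp2 into canonical double sums
  have hrw : ∀ f : ℕ → ℕ → ℝ, negbinExp2 (r + 1) p (r - 1) (1 - p) f
      = ∑' k₁ : ℕ, ∑' k₂ : ℕ,
        (((r + k₁).choose r : ℝ) * p ^ (r+1) * (1-p) ^ k₁) *
        (((r - 2 + k₂).choose (r - 2) : ℝ) * (1-p) ^ (r-1) * p ^ k₂) *
        f (r + 1 + k₁) (r - 1 + k₂) := by
    intro f
    rw [negbinExp2]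
    apply tsum_congr; intro k₁
    apply tsum_congr; intro k₂
    rw [show r + 1 + k₁ - 1 = r + k₁ from by omega, show r + 1 - 1 = r from by omega,
      show r - 1 + k₂ - 1 = r - 2 + k₂ from by omega, show r - 1 - 1 = r - 2 from by omega,
      sub_sub_cancel]
  -- ghat values
  have hg : ∀ k₁ k₂ : ℕ, ghat r (r + 1 + k₁) (r - 1 + k₂)
      = ((r:ℝ) / ((r:ℝ) + k₁)) * (((r:ℝ) - 1 + k₂) / ((r:ℝ) - 1)) := by
    intro k₁ k₂
    have hc1 : ((r + 1 + k₁ : ℕ) : ℝ) - 1 = (r:ℝ) + k₁ := by push_cast; ring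
    have hc2 : ((r - 1 + k₂ : ℕ) : ℝ) = (r:ℝ) - 1 + k₂ := by
      rw [Nat.cast_add, Nat.cast_sub (show 1 ≤ r by omega)]; push_cast; ring
    rw [ghat, hc1, hc2]
  -- evaluate the two expectations
  have hEg : negbinExp2 (r + 1) p (r - 1) (1 - p) (ghat r) = p * (1 / (1-p)) := by
    rw [hrw]
    have e : ∀ k₁ k₂ : ℕ,
        (((r + k₁).choose r : ℝ) * p ^ (r+1) * (1-p) ^ k₁) *
        (((r - 2 + k₂).choose (r - 2) : ℝ) * (1-p) ^ (r-1) * p ^ k₂) *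
        ghat r (r + 1 + k₁) (r - 1 + k₂)
        = (((r + k₁).choose r : ℝ) * p ^ (r+1) * (1-p) ^ k₁ * ((r:ℝ) / ((r:ℝ) + k₁))) *
          (((r - 2 + k₂).choose (r - 2) : ℝ) * (1-p) ^ (r-1) * p ^ k₂ *
            (((r:ℝ) - 1 + k₂) / ((r:ℝ) - 1))) := by
      intro k₁ k₂; rw [hg]; ring
    rw [tsum_congr (fun k₁ => tsum_congr (fun k₂ => e k₁ k₂))]
    rw [tsum_congr (fun k₁ => tsum_mul_left)]
    rw [hN2a.tsum_eq, tsum_mul_right, hN1a.tsum_eq]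
  have hEg2 : negbinExp2 (r + 1) p (r - 1) (1 - p) (fun n₁ n₂ => (ghat r n₁ n₂) ^ 2)
      = ((r:ℝ) * p * nbD r p) * (((r:ℝ) - 1 + p) / (((r:ℝ) - 1) * (1-p) ^ 2)) := by
    rw [hrw]
    have e : ∀ k₁ k₂ : ℕ,
        (((r + k₁).choose r : ℝ) * p ^ (r+1) * (1-p) ^ k₁) *
        (((r - 2 + k₂).choose (r - 2) : ℝ) * (1-p) ^ (r-1) * p ^ k₂) *
        (ghat r (r + 1 + k₁) (r - 1 + k₂)) ^ 2
        = (((r + k₁).choose r : ℝ) * p ^ (r+1) * (1-p) ^ k₁ * ((r:ℝ) / ((r:ℝ) + k₁)) ^ 2) *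
          (((r - 2 + k₂).choose (r - 2) : ℝ) * (1-p) ^ (r-1) * p ^ k₂ *
            (((r:ℝ) - 1 + k₂) / ((r:ℝ) - 1)) ^ 2) := by
      intro k₁ k₂; rw [hg]; ring
    rw [tsum_congr (fun k₁ => tsum_congr (fun k₂ => e k₁ k₂))]
    rw [tsum_congr (fun k₁ => tsum_mul_left)]
    rw [hN2b.tsum_eq, tsum_mul_right, hN1b.tsum_eq]
  rw [hEg, hEg2]
  -- final algebra
  have hkey := Dkey r hr hp0 hp1
  have hDnn := nbD_nonneg r hr hp0 hp1
  set D : ℝ := nbD r p with hDdef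
  set R : ℝ := (r:ℝ) with hRdef
  have hpne : p ≠ 0 := hp0.ne'
  have ha2 : (0:ℝ) < R - 1 + 2*p := by linarith
  have e2 : ((R * p * D) * ((R - 1 + p) / ((R - 1) * (1-p) ^ 2)) - (p * (1 / (1-p))) ^ 2)
      / (p / (1 - p)) ^ 2 = R * (R - 1 + p) * D / ((R - 1) * p) - 1 := by
    field_simp
  rw [e2]
  rw [sub_le_iff_le_add]
  have e3 : R * (R - 1 + p) * D / ((R - 1) * p)
      = (R * (R - 1 + p) * (R - 1 + 2*p) * D) / ((R - 1) * p * (R - 1 + 2*p)) := by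
    rw [div_eq_div_iff (by positivity) (by positivity)]
    ring
  rw [e3]
  have e4 : (p * (R * (R - 1 + 2*p) - p * (1 - p))) / ((R - 1) * p * (R - 1 + 2*p))
      = 1 / (R - 1) * (1 - p * (1 - p) / (R - 1 + 2 * p)) + 1 := by
    field_simp
    ring
  calc (R * (R - 1 + p) * (R - 1 + 2*p) * D) / ((R - 1) * p * (R - 1 + 2*p))
      ≤ (p * (R * (R - 1 + 2*p) - p * (1 - p))) / ((R - 1) * p * (R - 1 + 2*p)) := by
        gcongr
    _ = 1 / (R - 1) * (1 - p * (1 - p) / (R - 1 + 2 * p)) + 1 := e4
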